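/- The composition C_0 ∘ X_0, where X_0 is the standard first generator of Thompson's group F viewed as a circle homeomorphism and C_0 is the rotation by 1/2, has order dividing 3, i.e. (C_0 ∘ X_0)^3 = id. -/
import Mathlib


instance : Fact ((0 : ℝ) < 1) := ⟨one_pos⟩

/-- The standard generators `X_k` of Thompson's group `F`, as piecewise-linear
maps of `[0,1]` (extended by junk values outside). -/
noncomputable def Xfun (k : ℕ) : ℝ → ℝ := fun x =>
  if x ≤ 1 - 1 / 2 ^ k then x
  else if x ≤ 1 - 1 / 2 ^ (k + 1) then x / 2 + 1 / 2 - 1 / 2 ^ (k + 1)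
  else if x ≤ 1 - 1 / 2 ^ (k + 2) then x - 1 / 2 ^ (k + 2)
  else 2 * x - 1

/-- The circle self-map induced by a map `g : ℝ → ℝ`, using the
representative in `[0,1)` of a point of the circle `[0,1]/~`. -/
noncomputable def circmap (g : ℝ → ℝ) : AddCircle (1 : ℝ) → AddCircle (1 : ℝ) :=
  fun x => ((g ((AddCircle.equivIco 1 0 x : Set.Ico (0 : ℝ) (0 + 1)) : ℝ)) : AddCircle (1 : ℝ))

/-- Rotation of the circle by `1/2`. -/
noncomputable def C₀ : AddCircle (1 : ℝ) → AddCircle (1 : ℝ) :=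
  fun x => x + ((1 / 2 : ℝ) : AddCircle (1 : ℝ))

lemma step (s : ℝ) :
    (C₀ ∘ circmap (Xfun 0)) ((s : ℝ) : AddCircle (1:ℝ)) = ((Xfun 0 (Int.fract s) + 1/2 : ℝ) : AddCircle (1:ℝ)) := by
  show circmap (Xfun 0) ((s:ℝ) : AddCircle (1:ℝ)) + _ = _
  rw [circmap]
  have h : ((AddCircle.equivIco 1 0 ((s:ℝ):AddCircle (1:ℝ)) : Set.Ico (0:ℝ) (0+1)) : ℝ) = Int.fract s := by
    rw [AddCircle.coe_equivIco_mk_apply]; simp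
  rw [h, ← AddCircle.coe_add]

lemma X1 {u : ℝ} (h : u ≤ 0) : Xfun 0 u = u := by
  unfold Xfun; rw [if_pos (by norm_num; linarith)]

lemma X2 {u : ℝ} (h1 : 0 < u) (h2 : u ≤ 1/2) : Xfun 0 u = u / 2 := by
  unfold Xfun
  rw [if_neg (by norm_num; linarith), if_pos (by norm_num; linarith)]
  norm_num

lemma X3 {u : ℝ} (h1 : 1/2 < u) (h2 : u ≤ 3/4) : Xfun 0 u = u - 1/4 := by
  unfold Xfun
  rw [if_neg (by norm_num; linarith), if_neg (by norm_num; linarith),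
    if_pos (by norm_num; linarith)]
  norm_num

lemma X4 {u : ℝ} (h1 : 3/4 < u) : Xfun 0 u = 2 * u - 1 := by
  unfold Xfun
  rw [if_neg (by norm_num; linarith), if_neg (by norm_num; linarith),
    if_neg (by norm_num; linarith)]

lemma F1 {u : ℝ} (h0 : 0 ≤ u) (h1 : u < 1) : Int.fract u = u :=
  Int.fract_eq_self.mpr ⟨h0, h1⟩

lemma F2 {u : ℝ} (h0 : 1 ≤ u) (h1 : u < 2) : Int.fract u = u - 1 := by
  have h : Int.fract (u - 1 + 1) = Int.fract (u - 1) := Int.fract_add_one _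
  rw [show u - 1 + 1 = u by ring] at h
  rw [h, F1 (by linarith) (by linarith)]

lemma coe_fract (r : ℝ) : ((Int.fract r : ℝ) : AddCircle (1:ℝ)) = (r : AddCircle (1:ℝ)) := by
  rw [Int.fract, sub_eq_add_neg, AddCircle.coe_add]
  have h : ((-(⌊r⌋:ℝ) : ℝ) : AddCircle (1:ℝ)) = 0 := by
    rw [AddCircle.coe_eq_zero_iff]
    exact ⟨-⌊r⌋, by rw [zsmul_eq_mul]; push_cast; ring⟩
  rw [h, add_zero]

lemma coe_one : (((1:ℝ)) : AddCircle (1:ℝ)) = 0 := by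
  rw [AddCircle.coe_eq_zero_iff]; exact ⟨1, by rw [zsmul_eq_mul]; norm_num⟩

/-- `(C₀ ∘ X₀)^3 = id` on the circle. -/
theorem C0_X0_order_three :
    ∀ x : AddCircle (1 : ℝ),
      (C₀ ∘ circmap (Xfun 0)) ((C₀ ∘ circmap (Xfun 0)) ((C₀ ∘ circmap (Xfun 0)) x)) = x := by
  intro x
  refine QuotientAddGroup.induction_on x fun r => ?_
  show (C₀ ∘ circmap (Xfun 0)) ((C₀ ∘ circmap (Xfun 0)) ((C₀ ∘ circmap (Xfun 0)) ((r:ℝ) : AddCircle (1:ℝ)))) = ((r:ℝ) : AddCircle (1:ℝ))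
  rw [← coe_fract r]
  set t := Int.fract r with ht
  have h0 : 0 ≤ t := Int.fract_nonneg r
  have h1 : t < 1 := Int.fract_lt_one r
  rw [step, step, step, F1 h0 h1]
  rcases le_or_gt t 0 with hA | hA
  · have ht0 : t = 0 := le_antisymm hA h0
    rw [ht0, X1 (u := 0) le_rfl, F1 (u := 0 + 1/2) (by norm_num) (by norm_num),
      X2 (u := 0 + 1/2) (by norm_num) (by norm_num),
      F1 (u := (0 + 1/2)/2 + 1/2) (by norm_num) (by norm_num),
      X3 (u := (0 + 1/2)/2 + 1/2) (by norm_num) (by norm_num),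
      show ((0:ℝ) + 1/2)/2 + 1/2 - 1/4 + 1/2 = (1:ℝ) by norm_num, coe_one]
    simp
  · rcases le_or_gt t (1/2) with hB | hB
    · rcases lt_or_eq_of_le hB with hC | hC
      · rw [X2 (u := t) hA hB, F1 (u := t/2 + 1/2) (by linarith) (by linarith),
          X3 (u := t/2 + 1/2) (by linarith) (by linarith),
          F1 (u := t/2 + 1/2 - 1/4 + 1/2) (by linarith) (by linarith),
          X4 (u := t/2 + 1/2 - 1/4 + 1/2) (by linarith),
          show 2 * (t/2 + 1/2 - 1/4 + 1/2) - 1 + 1/2 = t + 1 by ring,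
          AddCircle.coe_add, coe_one, add_zero]
      · rw [X2 (u := t) hA hB, F1 (u := t/2 + 1/2) (by linarith) (by linarith),
          X3 (u := t/2 + 1/2) (by linarith) (by linarith),
          F2 (u := t/2 + 1/2 - 1/4 + 1/2) (by linarith) (by linarith),
          X1 (u := t/2 + 1/2 - 1/4 + 1/2 - 1) (by linarith),
          show t/2 + 1/2 - 1/4 + 1/2 - 1 + 1/2 = t by linarith]
    · rcases le_or_gt t (3/4) with hD | hD
      · rcases lt_or_eq_of_le hD with hC | hC
        · rw [X3 (u := t) hB hD, F1 (u := t - 1/4 + 1/2) (by linarith) (by linarith),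
            X4 (u := t - 1/4 + 1/2) (by linarith),
            F2 (u := 2 * (t - 1/4 + 1/2) - 1 + 1/2) (by linarith) (by linarith),
            X2 (u := 2 * (t - 1/4 + 1/2) - 1 + 1/2 - 1) (by linarith) (by linarith),
            show (2 * (t - 1/4 + 1/2) - 1 + 1/2 - 1) / 2 + 1/2 = t by ring]
        · rw [X3 (u := t) hB hD,
            F2 (u := t - 1/4 + 1/2) (by linarith) (by linarith),
            X1 (u := t - 1/4 + 1/2 - 1) (by linarith),
            F1 (u := t - 1/4 + 1/2 - 1 + 1/2) (by linarith) (by linarith),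
            X2 (u := t - 1/4 + 1/2 - 1 + 1/2) (by linarith) (by linarith),
            show (t - 1/4 + 1/2 - 1 + 1/2) / 2 + 1/2 = t by linarith]
      · rw [X4 (u := t) hD, F2 (u := 2 * t - 1 + 1/2) (by linarith) (by linarith),
          X2 (u := 2 * t - 1 + 1/2 - 1) (by linarith) (by linarith),
          F1 (u := (2 * t - 1 + 1/2 - 1) / 2 + 1/2) (by linarith) (by linarith),
          X3 (u := (2 * t - 1 + 1/2 - 1) / 2 + 1/2) (by linarith) (by linarith),
          show (2 * t - 1 + 1/2 - 1) / 2 + 1/2 - 1/4 + 1/2 = t by ring]
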